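/- With $\xi^\alpha_k$ defined by $\xi^\alpha_{-1}(z)=z^{-\alpha}dz$, $\xi^\alpha_k = -d(\xi^\alpha_{k-1}/dx)$ for $x = z+1/z$, and $\mathcal{I}^1_a[f] = -\operatorname{Res}_{z=\infty}\frac{x^{a+1}}{(a+1)!}f$: the values are $\mathcal{I}^1_{2m}[\xi^1_0] = \frac{1}{(m!)^2}$, $\mathcal{I}^1_{2m+1}[\xi^0_0] = \frac{1}{m!(m+1)!}$, $\mathcal{I}^1_{2m+1}[\xi^1_0] = 0$, and $\mathcal{I}^1_{2m}[\xi^0_0] = 0$ for all $m \ge 0$. -/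

import Mathlib

/-- The coefficient (w.r.t. `dz`) of the 1-forms: `xi α 0` is the coefficient of
`ξ^α_{-1}(z) = z^{-α} dz`, and `xi α (k+1)` the coefficient of `ξ^α_k = -d(ξ^α_{k-1}/dx)`
where `x(z) = z + 1/z`. -/
noncomputable def xi (α : ℕ) : ℕ → ℂ → ℂ
  | 0 => fun z => z ^ (-(α : ℤ))
  | (k + 1) => fun z => - deriv (fun w => xi α k w / (1 - 1 / w ^ 2)) z

open Complex Metric Finset

lemma xi1_eval (z : ℂ) (h0 : z ≠ 0) (h1 : z^2 - 1 ≠ 0) :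
    xi 1 1 z = (z^2+1)/(z^2-1)^2 := by
  have hfun : (fun w : ℂ => xi 1 0 w / (1 - 1 / w ^ 2)) = fun w => w / (w^2 - 1) := by
    funext w
    show w ^ (-(1:ℕ):ℤ) / (1 - 1 / w ^ 2) = w / (w^2 - 1)
    by_cases hw0 : w = 0
    · simp [hw0]
    by_cases hw1 : w^2 - 1 = 0
    · have h2 : w^2 = 1 := by linear_combination hw1
      have : (1:ℂ) - 1 / w^2 = 0 := by rw [h2]; norm_num
      rw [this, hw1, div_zero, div_zero]
    · have h2 : (1:ℂ) - 1/w^2 ≠ 0 := by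
        intro h
        apply hw1
        have hww : w^2 ≠ 0 := pow_ne_zero _ hw0
        field_simp at h
        linear_combination h
      field_simp
      ring_nf
      simp [hw0]
  have hd : HasDerivAt (fun w : ℂ => w / (w^2 - 1))
      ((1 * (z^2-1) - z * (2 * z^1)) / (z^2-1)^2) z :=
    (hasDerivAt_id z).div ((hasDerivAt_pow 2 z).sub_const 1) h1
  show - deriv (fun w : ℂ => xi 1 0 w / (1 - 1 / w ^ 2)) z = _
  rw [hfun, hd.deriv]
  field_simp
  ring

lemma xi0_eval (z : ℂ) (h0 : z ≠ 0) (h1 : z^2 - 1 ≠ 0) :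
    xi 0 1 z = 2*z/(z^2-1)^2 := by
  have hev : (fun w : ℂ => xi 0 0 w / (1 - 1 / w ^ 2)) =ᶠ[nhds z] fun w => w^2 / (w^2 - 1) := by
    filter_upwards [eventually_ne_nhds h0] with w hw0
    show w ^ (-(0:ℕ):ℤ) / (1 - 1 / w ^ 2) = w^2 / (w^2 - 1)
    simp only [Nat.cast_zero, neg_zero, zpow_zero]
    by_cases hw1 : w^2 - 1 = 0
    · have h2 : w^2 = 1 := by linear_combination hw1
      have : (1:ℂ) - 1 / w^2 = 0 := by rw [h2]; norm_num
      rw [this, hw1, div_zero, div_zero]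
    · have hww : w^2 ≠ 0 := pow_ne_zero _ hw0
      have h2 : (1:ℂ) - 1/w^2 ≠ 0 := by
        intro h
        apply hw1
        field_simp at h
        linear_combination h
      field_simp
  have hd : HasDerivAt (fun w : ℂ => w^2 / (w^2 - 1))
      ((2 * z^1 * (z^2-1) - z^2 * (2 * z^1)) / (z^2-1)^2) z :=
    (hasDerivAt_pow 2 z).div ((hasDerivAt_pow 2 z).sub_const 1) h1
  show - deriv (fun w : ℂ => xi 0 0 w / (1 - 1 / w ^ 2)) z = _
  rw [hev.deriv_eq, hd.deriv]
  field_simp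
  ring

lemma hasDerivAt_key1 (N : ℕ) (z : ℂ) (h0 : z ≠ 0) (h1 : z^2 - 1 ≠ 0) :
    HasDerivAt (fun w : ℂ => -((w + 1/w)^(N+1) * (w/(w^2-1))) / ((N+1).factorial : ℂ))
      ((z + 1/z)^(N+1) / ((N+1).factorial : ℂ) * ((z^2+1)/(z^2-1)^2)
        - (z + 1/z)^N / ((N.factorial : ℂ) * z)) z := by
  have hinv : HasDerivAt (fun w : ℂ => 1/w) (-(1/z^2)) z := by
    simpa [one_div] using hasDerivAt_inv h0
  have hx : HasDerivAt (fun w : ℂ => w + 1/w) (1 + -(1/z^2)) z :=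
    (hasDerivAt_id z).add hinv
  have hp : HasDerivAt (fun w : ℂ => (w + 1/w)^(N+1))
      (((N:ℂ)+1) * (z + 1/z)^N * (1 + -(1/z^2))) z := by
    simpa using hx.fun_pow (N+1)
  have hf : HasDerivAt (fun w : ℂ => w/(w^2-1))
      ((1 * (z^2-1) - z * (2 * z^1)) / (z^2-1)^2) z :=
    (hasDerivAt_id z).div ((hasDerivAt_pow 2 z).sub_const 1) h1
  have hder := ((hp.mul hf).neg).div_const ((N+1).factorial : ℂ)
  refine hder.congr_deriv (Eq.symm ?_)
  have hfac : (((N+1).factorial : ℂ)) = ((N:ℂ)+1) * (N.factorial : ℂ) := by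
    push_cast [Nat.factorial_succ]; ring
  have hfn : (N.factorial : ℂ) ≠ 0 := Nat.cast_ne_zero.2 N.factorial_ne_zero
  have hfn1 : ((N:ℂ)+1) ≠ 0 := Nat.cast_add_one_ne_zero N
  rw [hfac]
  rw [pow_succ (z + 1/z) N]
  generalize (z + 1/z)^N = t
  generalize hF : (N.factorial : ℂ) = F at hfn
  generalize hc : ((N:ℂ)+1) = c at hfn1
  have e1 : c * t * (1 + -(1/z^2)) * (z/(z^2-1)) = c * t / z := by
    field_simp
    ring
  have e2 : (1*(z^2-1) - z*(2*z^1))/(z^2-1)^2 = -((z^2+1)/(z^2-1)^2) := by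
    rw [← neg_div]; congr 1; ring
  have hA : -(c * t / z) / (c*F) = -(t/(F*z)) := by
    rw [neg_div, div_div, show z*(c*F) = c*(F*z) from by ring, mul_div_mul_left _ _ hfn1]
  rw [e1, e2]
  conv_rhs => rw [neg_div, ← neg_div, neg_add, add_div, hA]
  ring

lemma hasDerivAt_key0 (N : ℕ) (z : ℂ) (h0 : z ≠ 0) (h1 : z^2 - 1 ≠ 0) :
    HasDerivAt (fun w : ℂ => -((w + 1/w)^(N+1) * (w^2/(w^2-1))) / ((N+1).factorial : ℂ))
      ((z + 1/z)^(N+1) / ((N+1).factorial : ℂ) * (2*z/(z^2-1)^2)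
        - (z + 1/z)^N / (N.factorial : ℂ)) z := by
  have hinv : HasDerivAt (fun w : ℂ => 1/w) (-(1/z^2)) z := by
    simpa [one_div] using hasDerivAt_inv h0
  have hx : HasDerivAt (fun w : ℂ => w + 1/w) (1 + -(1/z^2)) z :=
    (hasDerivAt_id z).add hinv
  have hp : HasDerivAt (fun w : ℂ => (w + 1/w)^(N+1))
      (((N:ℂ)+1) * (z + 1/z)^N * (1 + -(1/z^2))) z := by
    simpa using hx.fun_pow (N+1)
  have hf : HasDerivAt (fun w : ℂ => w^2/(w^2-1))
      ((2 * z^1 * (z^2-1) - z^2 * (2 * z^1)) / (z^2-1)^2) z :=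
    (hasDerivAt_pow 2 z).div ((hasDerivAt_pow 2 z).sub_const 1) h1
  have hder := ((hp.mul hf).neg).div_const ((N+1).factorial : ℂ)
  refine hder.congr_deriv (Eq.symm ?_)
  have hfac : (((N+1).factorial : ℂ)) = ((N:ℂ)+1) * (N.factorial : ℂ) := by
    push_cast [Nat.factorial_succ]; ring
  have hfn : (N.factorial : ℂ) ≠ 0 := Nat.cast_ne_zero.2 N.factorial_ne_zero
  have hfn1 : ((N:ℂ)+1) ≠ 0 := Nat.cast_add_one_ne_zero N
  rw [hfac]
  rw [pow_succ (z + 1/z) N]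
  generalize (z + 1/z)^N = t
  generalize hF : (N.factorial : ℂ) = F at hfn
  generalize hc : ((N:ℂ)+1) = c at hfn1
  have e1 : c * t * (1 + -(1/z^2)) * (z^2/(z^2-1)) = c * t := by
    field_simp
    ring
  have e2 : (2*z^1*(z^2-1) - z^2*(2*z^1))/(z^2-1)^2 = -((2*z)/(z^2-1)^2) := by
    rw [← neg_div]; congr 1; ring
  have hA : -(c * t) / (c*F) = -(t/F) := by
    rw [neg_div, mul_div_mul_left _ _ hfn1]
  rw [e1, e2]
  conv_rhs => rw [neg_div, ← neg_div, neg_add, add_div, hA]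
  ring

lemma circleIntegral_finsetSum {ι : Type*} (s : Finset ι) (f : ι → ℂ → ℂ) {c : ℂ} {R : ℝ}
    (h : ∀ i ∈ s, CircleIntegrable (f i) c R) :
    (∮ z in C(c, R), ∑ i ∈ s, f i z) = ∑ i ∈ s, ∮ z in C(c, R), f i z := by
  simp only [circleIntegral, smul_sum]
  exact intervalIntegral.integral_finset_sum fun i hi => (circleIntegrable_iff R).mp (h i hi)

lemma circle_binom (N : ℕ) (t : ℤ) {r : ℝ} (hr : 0 < r) :
    (∮ z in C(0, r), (z + 1/z)^N * z ^ t)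
      = ∑ k ∈ Finset.range (N+1),
          (if 2*(k:ℤ) + t = (N:ℤ) - 1 then ((N.choose k : ℂ)) * (2*Real.pi*Complex.I) else 0) := by
  have hsph : ∀ z ∈ sphere (0:ℂ) r, z ≠ 0 := fun z hz => by
    intro h
    rw [mem_sphere_zero_iff_norm, h, norm_zero] at hz
    exact (ne_of_gt hr) hz.symm
  have step1 : (∮ z in C(0, r), (z + 1/z)^N * z ^ t)
      = ∮ z in C(0, r), ∑ k ∈ Finset.range (N+1), (N.choose k : ℂ) * z ^ (2*(k:ℤ) - N + t) := by
    refine circleIntegral.integral_congr hr.le fun z hz => ?_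
    have hz0 := hsph z hz
    rw [add_pow, Finset.sum_mul]
    refine Finset.sum_congr rfl fun k hk => ?_
    have hkN : k ≤ N := Nat.lt_succ_iff.mp (Finset.mem_range.mp hk)
    have : z ^ k * (1/z) ^ (N - k) * (N.choose k : ℂ) * z ^ t
        = (N.choose k : ℂ) * (z ^ (k:ℤ) * z ^ (-((N:ℤ) - k)) * z ^ t) := by
      rw [one_div, inv_pow, ← zpow_natCast z k, ← zpow_natCast z (N - k), ← zpow_neg]
      have : ((N - k : ℕ) : ℤ) = (N:ℤ) - k := by omega
      rw [this]; ring
    rw [this, ← zpow_add₀ hz0, ← zpow_add₀ hz0]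
    congr 2
    ring
  rw [step1, circleIntegral_finsetSum]
  · refine Finset.sum_congr rfl fun k hk => ?_
    rw [circleIntegral.integral_const_mul]
    by_cases hcond : 2*(k:ℤ) + t = (N:ℤ) - 1
    · have he : 2*(k:ℤ) - N + t = -1 := by omega
      rw [he, if_pos hcond]
      have : (∮ z in C(0, r), z ^ (-1 : ℤ)) = ∮ z in C(0, r), (z - 0)⁻¹ := by
        refine circleIntegral.integral_congr hr.le fun z hz => ?_
        rw [sub_zero, zpow_neg_one]
      rw [this, circleIntegral.integral_sub_inv_of_mem_ball (by simpa using hr)]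
    · have he : 2*(k:ℤ) - N + t ≠ -1 := by omega
      rw [if_neg hcond]
      have : (∮ z in C(0, r), z ^ (2*(k:ℤ) - N + t)) = ∮ z in C(0, r), (z - 0) ^ (2*(k:ℤ) - N + t) := by
        refine circleIntegral.integral_congr hr.le fun z hz => ?_
        rw [sub_zero]
      rw [this, circleIntegral.integral_sub_zpow_of_ne he, mul_zero]
  · intro k hk
    apply ContinuousOn.circleIntegrable hr.le
    exact continuousOn_const.mul ((continuousOn_zpow₀ _).mono fun z hz => hsph z hz)

lemma sphere_ne_zero {r : ℝ} (hr : 1 < r) {z : ℂ} (hz : z ∈ sphere (0:ℂ) r) : z ≠ 0 := by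
  intro h
  rw [mem_sphere_zero_iff_norm, h, norm_zero] at hz
  linarith

lemma sphere_sq_ne_one {r : ℝ} (hr : 1 < r) {z : ℂ} (hz : z ∈ sphere (0:ℂ) r) : z^2 - 1 ≠ 0 := by
  rw [mem_sphere_zero_iff_norm] at hz
  intro h
  have h2 : z^2 = 1 := by linear_combination h
  have : ‖z^2‖ = 1 := by rw [h2, norm_one]
  rw [norm_pow, hz] at this
  nlinarith

lemma main1 (N : ℕ) {r : ℝ} (hr : 1 < r) :
    (∮ z in C(0, r), (z + 1/z)^(N+1) / ((N+1).factorial : ℂ) * ((z^2+1)/(z^2-1)^2))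
      = ((N.factorial : ℂ))⁻¹ * ∑ k ∈ Finset.range (N+1),
          (if 2*(k:ℤ) + (-1) = (N:ℤ) - 1 then ((N.choose k : ℂ)) * (2*Real.pi*Complex.I) else 0) := by
  have hr0 : (0:ℝ) < r := lt_trans one_pos hr
  have hfn : (N.factorial : ℂ) ≠ 0 := Nat.cast_ne_zero.2 N.factorial_ne_zero
  have c_add : ContinuousOn (fun z : ℂ => z + 1/z) (sphere (0:ℂ) r) :=
    continuousOn_id.add (continuousOn_const.div continuousOn_id fun z hz => sphere_ne_zero hr hz)
  have hint1 : CircleIntegrable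
      (fun z : ℂ => (z + 1/z)^(N+1) / ((N+1).factorial : ℂ) * ((z^2+1)/(z^2-1)^2)) 0 r := by
    apply ContinuousOn.circleIntegrable hr0.le
    exact ((c_add.pow _).div_const _).mul
      (((continuousOn_id.pow 2).add continuousOn_const).div
        (((continuousOn_id.pow 2).sub continuousOn_const).pow 2)
        fun z hz => pow_ne_zero _ (sphere_sq_ne_one hr hz))
  have hint2 : CircleIntegrable (fun z : ℂ => (z + 1/z)^N / ((N.factorial : ℂ) * z)) 0 r := by
    apply ContinuousOn.circleIntegrable hr0.le
    exact (c_add.pow _).div (continuousOn_const.mul continuousOn_id)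
      fun z hz => mul_ne_zero hfn (sphere_ne_zero hr hz)
  have hzero : (∮ z in C(0, r), ((z + 1/z)^(N+1) / ((N+1).factorial : ℂ) * ((z^2+1)/(z^2-1)^2)
        - (z + 1/z)^N / ((N.factorial : ℂ) * z))) = 0 := by
    refine circleIntegral.integral_eq_zero_of_hasDerivWithinAt
      (f := fun w : ℂ => -((w + 1/w)^(N+1) * (w/(w^2-1))) / ((N+1).factorial : ℂ))
      hr0.le fun z hz => ?_
    exact (hasDerivAt_key1 N z (sphere_ne_zero hr hz) (sphere_sq_ne_one hr hz)).hasDerivWithinAt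
  rw [circleIntegral.integral_sub hint1 hint2, sub_eq_zero] at hzero
  rw [hzero]
  have step : (∮ z in C(0, r), (z + 1/z)^N / ((N.factorial : ℂ) * z))
      = ∮ z in C(0, r), (N.factorial : ℂ)⁻¹ * ((z + 1/z)^N * z ^ (-1 : ℤ)) := by
    refine circleIntegral.integral_congr hr0.le fun z hz => ?_
    rw [zpow_neg_one, div_eq_mul_inv, mul_inv]
    ring
  rw [step, circleIntegral.integral_const_mul, circle_binom N (-1) hr0]

lemma main0 (N : ℕ) {r : ℝ} (hr : 1 < r) :
    (∮ z in C(0, r), (z + 1/z)^(N+1) / ((N+1).factorial : ℂ) * (2*z/(z^2-1)^2))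
      = ((N.factorial : ℂ))⁻¹ * ∑ k ∈ Finset.range (N+1),
          (if 2*(k:ℤ) + 0 = (N:ℤ) - 1 then ((N.choose k : ℂ)) * (2*Real.pi*Complex.I) else 0) := by
  have hr0 : (0:ℝ) < r := lt_trans one_pos hr
  have hfn : (N.factorial : ℂ) ≠ 0 := Nat.cast_ne_zero.2 N.factorial_ne_zero
  have c_add : ContinuousOn (fun z : ℂ => z + 1/z) (sphere (0:ℂ) r) :=
    continuousOn_id.add (continuousOn_const.div continuousOn_id fun z hz => sphere_ne_zero hr hz)
  have hint1 : CircleIntegrable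
      (fun z : ℂ => (z + 1/z)^(N+1) / ((N+1).factorial : ℂ) * (2*z/(z^2-1)^2)) 0 r := by
    apply ContinuousOn.circleIntegrable hr0.le
    exact ((c_add.pow _).div_const _).mul
      ((continuousOn_const.mul continuousOn_id).div
        (((continuousOn_id.pow 2).sub continuousOn_const).pow 2)
        fun z hz => pow_ne_zero _ (sphere_sq_ne_one hr hz))
  have hint2 : CircleIntegrable (fun z : ℂ => (z + 1/z)^N / (N.factorial : ℂ)) 0 r := by
    apply ContinuousOn.circleIntegrable hr0.le
    exact (c_add.pow _).div_const _
  have hzero : (∮ z in C(0, r), ((z + 1/z)^(N+1) / ((N+1).factorial : ℂ) * (2*z/(z^2-1)^2)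
        - (z + 1/z)^N / (N.factorial : ℂ))) = 0 := by
    refine circleIntegral.integral_eq_zero_of_hasDerivWithinAt
      (f := fun w : ℂ => -((w + 1/w)^(N+1) * (w^2/(w^2-1))) / ((N+1).factorial : ℂ))
      hr0.le fun z hz => ?_
    exact (hasDerivAt_key0 N z (sphere_ne_zero hr hz) (sphere_sq_ne_one hr hz)).hasDerivWithinAt
  rw [circleIntegral.integral_sub hint1 hint2, sub_eq_zero] at hzero
  rw [hzero]
  have step : (∮ z in C(0, r), (z + 1/z)^N / (N.factorial : ℂ))
      = ∮ z in C(0, r), (N.factorial : ℂ)⁻¹ * ((z + 1/z)^N * z ^ (0 : ℤ)) := by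
    refine circleIntegral.integral_congr hr0.le fun z hz => ?_
    rw [zpow_zero, mul_one, div_eq_inv_mul]
  rw [step, circleIntegral.integral_const_mul, circle_binom N 0 hr0]

lemma sum_eval_pos (M j : ℕ) (t : ℤ) (hj : j ∈ Finset.range (M+1)) (hcond : 2*(j:ℤ) + t = (M:ℤ) - 1) :
    (∑ k ∈ Finset.range (M+1),
      (if 2*(k:ℤ) + t = (M:ℤ) - 1 then ((M.choose k : ℂ)) * (2*Real.pi*Complex.I) else 0))
    = ((M.choose j : ℂ)) * (2*Real.pi*Complex.I) := by
  rw [Finset.sum_eq_single_of_mem j hj]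
  · rw [if_pos hcond]
  · intro b _ hb
    rw [if_neg]
    intro hc
    exact hb (by omega)

lemma sum_eval_zero (M : ℕ) (t : ℤ) (h : ∀ k : ℕ, ¬ (2*(k:ℤ) + t = (M:ℤ) - 1)) :
    (∑ k ∈ Finset.range (M+1),
      (if 2*(k:ℤ) + t = (M:ℤ) - 1 then ((M.choose k : ℂ)) * (2*Real.pi*Complex.I) else 0)) = 0 :=
  Finset.sum_eq_zero fun k _ => if_neg (h k)


/-- With `𝓘^1_a[f] = -Res_{z=∞} (x^{a+1}/(a+1)!) f` computed as the counterclockwise circle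
integral `(1/2πi) ∮_{|z|=r}` for any radius `r > 1` (beyond all finite poles):
`𝓘^1_{2m}[ξ^1_0] = 1/(m!)^2`, `𝓘^1_{2m+1}[ξ^0_0] = 1/(m!(m+1)!)`,
`𝓘^1_{2m+1}[ξ^1_0] = 0`, `𝓘^1_{2m}[ξ^0_0] = 0`. -/
theorem stmt18 (m : ℕ) (r : ℝ) (hr : 1 < r) :
    (∮ z in C(0, r), (z + 1 / z) ^ (2 * m + 1) / (Nat.factorial (2 * m + 1) : ℂ) *
        xi 1 1 z) / (2 * (Real.pi : ℂ) * Complex.I)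
      = 1 / (Nat.factorial m : ℂ) ^ 2 ∧
    (∮ z in C(0, r), (z + 1 / z) ^ (2 * m + 2) / (Nat.factorial (2 * m + 2) : ℂ) *
        xi 0 1 z) / (2 * (Real.pi : ℂ) * Complex.I)
      = 1 / ((Nat.factorial m : ℂ) * (Nat.factorial (m + 1) : ℂ)) ∧
    (∮ z in C(0, r), (z + 1 / z) ^ (2 * m + 2) / (Nat.factorial (2 * m + 2) : ℂ) *
        xi 1 1 z) / (2 * (Real.pi : ℂ) * Complex.I) = 0 ∧
    (∮ z in C(0, r), (z + 1 / z) ^ (2 * m + 1) / (Nat.factorial (2 * m + 1) : ℂ) *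
        xi 0 1 z) / (2 * (Real.pi : ℂ) * Complex.I) = 0 := by
  have hr0 : (0:ℝ) < r := lt_trans one_pos hr
  have h2pi : (2 * (Real.pi : ℂ) * Complex.I) ≠ 0 := Complex.two_pi_I_ne_zero
  have hmf : (m.factorial : ℂ) ≠ 0 := Nat.cast_ne_zero.2 m.factorial_ne_zero
  have hmf1 : ((m+1).factorial : ℂ) ≠ 0 := Nat.cast_ne_zero.2 (m+1).factorial_ne_zero
  -- congruence to explicit rational integrands
  have cong1 : ∀ n : ℕ, (∮ z in C(0, r), (z + 1 / z) ^ n / (Nat.factorial n : ℂ) * xi 1 1 z)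
      = ∮ z in C(0, r), (z + 1 / z) ^ n / (Nat.factorial n : ℂ) * ((z^2+1)/(z^2-1)^2) := by
    intro n
    refine circleIntegral.integral_congr hr0.le fun z hz => ?_
    rw [xi1_eval z (sphere_ne_zero hr hz) (sphere_sq_ne_one hr hz)]
  have cong0 : ∀ n : ℕ, (∮ z in C(0, r), (z + 1 / z) ^ n / (Nat.factorial n : ℂ) * xi 0 1 z)
      = ∮ z in C(0, r), (z + 1 / z) ^ n / (Nat.factorial n : ℂ) * (2*z/(z^2-1)^2) := by
    intro n
    refine circleIntegral.integral_congr hr0.le fun z hz => ?_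
    rw [xi0_eval z (sphere_ne_zero hr hz) (sphere_sq_ne_one hr hz)]
  refine ⟨?_, ?_, ?_, ?_⟩
  · -- 𝓘¹_{2m}[ξ¹₀] = 1/(m!)²
    rw [cong1 (2*m+1), main1 (2*m) hr,
      sum_eval_pos (2*m) m (-1) (by simp; omega) (by push_cast; ring),
      mul_div_assoc, mul_div_assoc, div_self h2pi, mul_one]
    have hnat : (2*m).choose m * m.factorial * m.factorial = (2*m).factorial := by
      have := Nat.choose_mul_factorial_mul_factorial (show m ≤ 2*m by omega)
      rw [show 2*m - m = m by omega] at this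
      exact this
    rw [inv_mul_eq_div, div_eq_div_iff (Nat.cast_ne_zero.2 (2*m).factorial_ne_zero)
      (pow_ne_zero _ hmf)]
    push_cast [← hnat]
    ring
  · -- 𝓘¹_{2m+1}[ξ⁰₀] = 1/(m!(m+1)!)
    rw [show 2*m+2 = 2*m+1+1 from rfl, cong0 (2*m+1+1), main0 (2*m+1) hr,
      sum_eval_pos (2*m+1) m 0 (by simp; omega) (by push_cast; ring),
      mul_div_assoc, mul_div_assoc, div_self h2pi, mul_one]
    have hnat : (2*m+1).choose m * m.factorial * (m+1).factorial = (2*m+1).factorial := by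
      have := Nat.choose_mul_factorial_mul_factorial (show m ≤ 2*m+1 by omega)
      rw [show 2*m+1 - m = m+1 by omega] at this
      exact this
    rw [inv_mul_eq_div, div_eq_div_iff (Nat.cast_ne_zero.2 (2*m+1).factorial_ne_zero)
      (mul_ne_zero hmf hmf1)]
    push_cast [← hnat]
    ring
  · -- 𝓘¹_{2m+1}[ξ¹₀] = 0
    rw [show 2*m+2 = 2*m+1+1 from rfl, cong1 (2*m+1+1), main1 (2*m+1) hr,
      sum_eval_zero (2*m+1) (-1) (fun k => by omega)]
    simp
  · -- 𝓘¹_{2m}[ξ⁰₀] = 0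
    rw [cong0 (2*m+1), main0 (2*m) hr, sum_eval_zero (2*m) 0 (fun k => by omega)]
    simp
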